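/- Let d ≥ 2, n ≥ 1, and let α_1, ..., α_{d-1} be integers with α_1, ..., α_k ≥ 0, α_{k+1}, ..., α_{d-1} ≤ 0, and |α_1| maximal among all |α_i|. Set s = 1/(4d+4), b^{(i)} = (1,...,1) − (1/2)e_i ∈ R^d, and suppose g = α_1 a^{(1)} + ... + α_{d-1} a^{(d-1)} where each a^{(i)} ∈ R^d satisfies ‖(n/d)b^{(i)} − a^{(i)}‖_∞ < (n/d)s, and suppose ‖g‖_∞ < 2(n/d)s. Then α_1 = 0, and hence g = 0. -/

import Mathlib

noncomputable section

/-- `b^{(i)} = (1,…,1) - (1/2) e_i` as a vector in `ℝ^d`, for `i` among the first `d-1`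
coordinates. -/
def bvec (d : ℕ) (i : Fin (d - 1)) : Fin d → ℝ :=
  fun k => if (k : ℕ) = (i : ℕ) then 1 / 2 else 1

/-- Let `α_1,…,α_{d-1}` be integers with `α_1,…,α_k ≥ 0`, `α_{k+1},…,α_{d-1} ≤ 0`, and `|α_1|`
maximal among the `|α_i|`. If `g = α_1 a^{(1)} + ⋯ + α_{d-1} a^{(d-1)}` where
`‖(n/d)b^{(i)} - a^{(i)}‖_∞ < (n/d)s` with `s = 1/(4d+4)`, and `‖g‖_∞ < 2(n/d)s`, then
`α_1 = 0` and hence `g = 0`. -/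
theorem small_combination_vanishes (d n : ℕ) (hd : 2 ≤ d) (hn : 0 < n)
    (k : ℕ) (hk1 : 1 ≤ k) (hk2 : k ≤ d - 1)
    (α : Fin (d - 1) → ℤ)
    (hpos : ∀ i : Fin (d - 1), (i : ℕ) < k → 0 ≤ α i)
    (hneg : ∀ i : Fin (d - 1), k ≤ (i : ℕ) → α i ≤ 0)
    (hmax : ∀ i, |α i| ≤ |α ⟨0, by omega⟩|)
    (a : Fin (d - 1) → Fin d → ℝ)
    (ha : ∀ i j, |(n : ℝ) / d * bvec d i j - a i j| < (n : ℝ) / d * (1 / (4 * d + 4)))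
    (g : Fin d → ℝ) (hg : g = fun j => ∑ i, (α i : ℝ) * a i j)
    (hgsmall : ∀ j, |g j| < 2 * ((n : ℝ) / d) * (1 / (4 * d + 4))) :
    α ⟨0, by omega⟩ = 0 ∧ g = 0 := by
  have hdR : (2:ℝ) ≤ (d:ℝ) := by exact_mod_cast hd
  set c : ℝ := (n : ℝ) / d with hc_def
  set s : ℝ := 1 / (4 * (d:ℝ) + 4) with hs_def
  have hc : 0 < c := div_pos (by exact_mod_cast hn) (by linarith)
  have hs : 0 < s := by rw [hs_def]; positivity
  set i0 : Fin (d-1) := ⟨0, by omega⟩ with hi0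
  set A : ℝ := ∑ i, (α i : ℝ) with hA_def
  set S : ℝ := ∑ i, |(α i : ℝ)| with hS_def
  have hα0 : 0 ≤ α i0 := hpos i0 (by show 0 < k; omega)
  have key : ∀ j : Fin d, |∑ i, (α i:ℝ) * bvec d i j| < (2 + S) * s := by
    intro j
    have h1 : g j - c * ∑ i, (α i:ℝ) * bvec d i j
        = ∑ i, (α i:ℝ) * (a i j - c * bvec d i j) := by
      rw [hg]
      simp only [Finset.mul_sum, ← Finset.sum_sub_distrib]
      exact Finset.sum_congr rfl fun i _ => by ring
    have h2 : |∑ i, (α i:ℝ) * (a i j - c * bvec d i j)| ≤ S * (c * s) := by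
      refine le_trans (Finset.abs_sum_le_sum_abs _ _) ?_
      rw [hS_def, Finset.sum_mul]
      refine Finset.sum_le_sum fun i _ => ?_
      rw [abs_mul]
      refine mul_le_mul_of_nonneg_left ?_ (abs_nonneg _)
      rw [abs_sub_comm]
      exact (ha i j).le
    have h3 : |c * (∑ i, (α i:ℝ) * bvec d i j)|
        ≤ |g j| + |g j - c * ∑ i, (α i:ℝ) * bvec d i j| := by
      have := abs_sub (g j) (g j - c * ∑ i, (α i:ℝ) * bvec d i j)
      calc |c * (∑ i, (α i:ℝ) * bvec d i j)|
          = |g j - (g j - c * ∑ i, (α i:ℝ) * bvec d i j)| := by ring_nf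
        _ ≤ _ := abs_sub _ _
    have hgj := hgsmall j
    have h4 : c * |∑ i, (α i:ℝ) * bvec d i j| < c * ((2 + S) * s) := by
      have habs : c * |∑ i, (α i:ℝ) * bvec d i j|
          = |c * ∑ i, (α i:ℝ) * bvec d i j| := by
        rw [abs_mul, abs_of_pos hc]
      rw [habs]
      rw [← h1] at h2
      nlinarith [h2, h3, hgj]
    exact (mul_lt_mul_iff_right₀ hc).mp h4
  have hBlast : (∑ i, (α i:ℝ) * bvec d i ⟨d-1, by omega⟩) = A := by
    refine Finset.sum_congr rfl fun i _ => ?_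
    have hi := i.isLt
    unfold bvec
    rw [if_neg (by simp; omega), mul_one]
  have hB0 : (∑ i, (α i:ℝ) * bvec d i ⟨0, by omega⟩) = A - (α i0 : ℝ)/2 := by
    have he : ∀ i : Fin (d-1), (α i:ℝ) * bvec d i ⟨0, by omega⟩
        = (α i:ℝ) - (if i = i0 then (α i:ℝ)/2 else 0) := by
      intro i
      unfold bvec
      by_cases h : i = i0
      · subst h
        rw [if_pos (by simp [hi0]), if_pos rfl]
        ring
      · rw [if_neg (by simp [hi0, Fin.ext_iff] at h ⊢; omega), if_neg h]
        ring
    rw [Finset.sum_congr rfl fun i _ => he i, Finset.sum_sub_distrib,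
      Finset.sum_ite_eq' Finset.univ i0 (fun i => (α i:ℝ)/2)]
    simp [hA_def]
  have hA1 : |A| < (2 + S) * s := by rw [← hBlast]; exact key _
  have hA2 : |A - (α i0:ℝ)/2| < (2 + S) * s := by rw [← hB0]; exact key _
  have hSle : S ≤ ((d:ℝ) - 1) * (α i0 : ℝ) := by
    have hcard : (Finset.univ : Finset (Fin (d-1))).card = d - 1 := by simp
    calc S ≤ ∑ _i : Fin (d-1), (α i0 : ℝ) := by
          refine Finset.sum_le_sum fun i _ => ?_
          have := hmax i
          have h1 : |(α i:ℝ)| ≤ |(α i0:ℝ)| := by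
            rw [← Int.cast_abs, ← Int.cast_abs]
            exact_mod_cast this
          have h2 : |(α i0:ℝ)| = (α i0:ℝ) :=
            abs_of_nonneg (by exact_mod_cast hα0)
          rw [h2] at h1
          exact h1
      _ = ((d:ℝ) - 1) * (α i0 : ℝ) := by
          rw [Finset.sum_const, hcard, nsmul_eq_mul]
          congr 1
          have : ((d - 1 : ℕ) : ℝ) = (d:ℝ) - 1 := by
            have := Nat.cast_sub (by omega : 1 ≤ d) (R := ℝ)
            simpa using this
          exact this
  have hα0R : (0:ℝ) ≤ (α i0 : ℝ) := by exact_mod_cast hα0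
  have htri : (α i0 : ℝ)/2 ≤ |A| + |A - (α i0:ℝ)/2| := by
    have h := abs_sub A (A - (α i0:ℝ)/2)
    have heq : A - (A - (α i0:ℝ)/2) = (α i0:ℝ)/2 := by ring
    rw [heq, abs_of_nonneg (by linarith)] at h
    exact h
  have hlt1 : (α i0 : ℝ) < 1 := by
    have h4 : (0:ℝ) < 4 * (d:ℝ) + 4 := by linarith
    have hstep : (α i0 : ℝ)/2 < 2 * (2 + ((d:ℝ) - 1) * (α i0:ℝ)) * s := by
      have hle : (2 + S) * s ≤ (2 + ((d:ℝ) - 1) * (α i0:ℝ)) * s :=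
        mul_le_mul_of_nonneg_right (by linarith) hs.le
      nlinarith [hA1, hA2, htri, hle]
    rw [hs_def] at hstep
    have h6 := mul_lt_mul_of_pos_right hstep h4
    have h5 : (α i0:ℝ)/2 * (4*(d:ℝ)+4) < 2 * (2 + ((d:ℝ) - 1) * (α i0:ℝ)) := by
      calc (α i0:ℝ)/2 * (4*(d:ℝ)+4)
          < 2 * (2 + ((d:ℝ) - 1) * (α i0:ℝ)) * (1 / (4 * (d:ℝ) + 4)) * (4*(d:ℝ)+4) := h6
        _ = 2 * (2 + ((d:ℝ) - 1) * (α i0:ℝ)) := by field_simp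
    nlinarith [h5]
  have hz : α i0 = 0 := by
    have : α i0 < 1 := by exact_mod_cast hlt1
    omega
  have hall : ∀ i, α i = 0 := by
    intro i
    have := hmax i
    rw [hz] at this
    simpa using this
  refine ⟨hz, ?_⟩
  rw [hg]
  funext j
  simp [hall]
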